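/- arXiv:1205.0417 — 5 statements merged into one kernel-verified Lean document; each statement's English description precedes it below -/
import Mathlib

section
/- (Fréchet–Hoeffding bounds) Let Γ be a bivariate Pareto–Lévy copula. Then for every (u₁,u₂) in its domain, Γ⊥(u₁,u₂) ≤ Γ(u₁,u₂) ≤ Γ‖(u₁,u₂), where Γ‖(u₁,u₂) = 1/max(u₁,u₂) and Γ⊥(u₁,u₂) = (1/u₁)·1{u₂ = 0} + (1/u₂)·1{u₁ = 0}, with the convention 1/∞ = 0. -/
open scoped ENNReal

/-- A bivariate Pareto–Lévy copula: a function on `[0,∞]² \ {(0,0)}` (realized as a total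
function on `ℝ≥0∞ × ℝ≥0∞`, with the conditions only imposed away from `(0,0)`), with values
in `[0,∞)`, which is grounded, has Pareto margins, and is 2-increasing. -/
structure ParetoLevyCopula where
  toFun : ℝ≥0∞ → ℝ≥0∞ → ℝ
  nonneg : ∀ u₁ u₂ : ℝ≥0∞, (u₁, u₂) ≠ (0, 0) → 0 ≤ toFun u₁ u₂
  grounded_left : ∀ u : ℝ≥0∞, u ≠ 0 → toFun u ⊤ = 0
  grounded_right : ∀ u : ℝ≥0∞, u ≠ 0 → toFun ⊤ u = 0
  margin_left : ∀ u : ℝ≥0∞, u ≠ 0 → toFun u 0 = (u⁻¹).toReal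
  margin_right : ∀ u : ℝ≥0∞, u ≠ 0 → toFun 0 u = (u⁻¹).toReal
  two_increasing : ∀ u₁ u₂ v₁ v₂ : ℝ≥0∞, u₁ ≤ v₁ → u₂ ≤ v₂ → (u₁, u₂) ≠ (0, 0) →
    0 ≤ toFun v₁ v₂ - toFun v₁ u₂ - toFun u₁ v₂ + toFun u₁ u₂

/-- Fréchet–Hoeffding bounds for Pareto–Lévy copulas: `Γ⊥ ≤ Γ ≤ Γ‖` on the domain
`[0,∞]² \ {(0,0)}`, where `Γ‖(u₁,u₂) = 1/max(u₁,u₂)` and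
`Γ⊥(u₁,u₂) = (1/u₁)·1{u₂=0} + (1/u₂)·1{u₁=0}`, with the convention `1/∞ = 0`. -/
theorem paretoLevyCopula_frechet_hoeffding (C : ParetoLevyCopula) (u₁ u₂ : ℝ≥0∞)
    (h : (u₁, u₂) ≠ (0, 0)) :
    ((if u₂ = 0 then (u₁⁻¹).toReal else 0) + (if u₁ = 0 then (u₂⁻¹).toReal else 0))
      ≤ C.toFun u₁ u₂ ∧
    C.toFun u₁ u₂ ≤ ((u₁ ⊔ u₂)⁻¹).toReal := by
  constructor
  · by_cases h1 : u₁ = 0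
    · have h2 : u₂ ≠ 0 := by simp [h1] at h; exact h
      simp [h1, h2, C.margin_right u₂ h2]
    · by_cases h2 : u₂ = 0
      · simp [h1, h2, C.margin_left u₁ h1]
      · simpa [h1, h2] using C.nonneg u₁ u₂ h
  · by_cases h1 : u₁ = 0
    · have h2 : u₂ ≠ 0 := by simp [h1] at h; exact h
      rw [h1, C.margin_right u₂ h2]
      simp
    · by_cases h2 : u₂ = 0
      · rw [h2, C.margin_left u₁ h1]
        simp
      · rcases le_total u₁ u₂ with hle | hle
        · have key := C.two_increasing 0 u₂ u₁ ⊤ zero_le le_top (by simp [h2])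
          rw [C.grounded_left u₁ h1, C.margin_right u₂ h2,
            C.margin_right ⊤ (by simp)] at key
          simp only [sup_eq_right.mpr hle]
          simp [ENNReal.toReal_inv] at key ⊢
          linarith
        · have key := C.two_increasing u₁ 0 ⊤ u₂ le_top zero_le (by simp [h1])
          rw [C.grounded_right u₂ h2, C.margin_left u₁ h1,
            C.margin_left ⊤ (by simp)] at key
          simp only [sup_eq_left.mpr hle]
          simp [ENNReal.toReal_inv] at key ⊢
          linarith
end

section
/- (Asymptotic covariance comparison of the empirical and oracle Pareto–Lévy copula estimators) Let Γ be a bivariate Pareto–Lévy copula whose restriction to (0,∞)² has continuous first-order partial derivatives ∂₁Γ and ∂₂Γ, and suppose that for every fixed u₂ ∈ (0,∞) the map u₁ ↦ u₁·Γ(u₁,u₂) is nondecreasing on (0,∞), and for every fixed u₁ ∈ (0,∞) the map u₂ ↦ u₂·Γ(u₁,u₂) is nondecreasing on (0,∞). Then for all u = (u₁,u₂) and v = (v₁,v₂) in (0,∞)², K(u,v) ≤ Γ(u₁∨v₁, u₂∨v₂); in particular K(u,u) ≤ Γ(u). -/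
open scoped ENNReal

/-- The restriction of a Pareto–Lévy copula to `(0,∞)²`, viewed as a real function. -/
noncomputable def plcReal (C : ParetoLevyCopula) (x y : ℝ) : ℝ :=
  C.toFun (ENNReal.ofReal x) (ENNReal.ofReal y)

/-- The asymptotic covariance kernel of the empirical Pareto–Lévy copula process,
built from a function `g` on `(0,∞)²` together with its partial derivatives `D₁, D₂`:
`K(u,v) = g(u₁∨v₁,u₂∨v₂) + u₁²∂₁g(u)g(u₁∨v₁,v₂) + u₂²∂₂g(u)g(v₁,u₂∨v₂)`
`+ v₁²∂₁g(v)g(u₁∨v₁,u₂) + v₂²∂₂g(v)g(u₁,u₂∨v₂) + u₁²v₁²∂₁g(u)∂₁g(v)/(u₁∨v₁)`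
`+ u₁²v₂²∂₁g(u)∂₂g(v)g(u₁,v₂) + u₂²v₁²∂₂g(u)∂₁g(v)g(v₁,u₂) + u₂²v₂²∂₂g(u)∂₂g(v)/(u₂∨v₂)`. -/
noncomputable def plcKernel (g D₁ D₂ : ℝ → ℝ → ℝ) (u v : ℝ × ℝ) : ℝ :=
  g (max u.1 v.1) (max u.2 v.2)
    + u.1 ^ 2 * D₁ u.1 u.2 * g (max u.1 v.1) v.2
    + u.2 ^ 2 * D₂ u.1 u.2 * g v.1 (max u.2 v.2)
    + v.1 ^ 2 * D₁ v.1 v.2 * g (max u.1 v.1) u.2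
    + v.2 ^ 2 * D₂ v.1 v.2 * g u.1 (max u.2 v.2)
    + u.1 ^ 2 * v.1 ^ 2 * D₁ u.1 u.2 * D₁ v.1 v.2 / max u.1 v.1
    + u.1 ^ 2 * v.2 ^ 2 * D₁ u.1 u.2 * D₂ v.1 v.2 * g u.1 v.2
    + u.2 ^ 2 * v.1 ^ 2 * D₂ u.1 u.2 * D₁ v.1 v.2 * g v.1 u.2
    + u.2 ^ 2 * v.2 ^ 2 * D₂ u.1 u.2 * D₂ v.1 v.2 / max u.2 v.2

private lemma deriv_nonneg_of_monotoneOn_Ioi {f : ℝ → ℝ} {f' x : ℝ} (hx : 0 < x)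
    (hm : MonotoneOn f (Set.Ioi 0)) (hd : HasDerivAt f f' x) : 0 ≤ f' := by
  have ht : Filter.Tendsto (slope f x) (nhdsWithin x {x}ᶜ) (nhds f') :=
    hasDerivAt_iff_tendsto_slope.1 hd
  have ht' : Filter.Tendsto (slope f x) (nhdsWithin x (Set.Ioi x)) (nhds f') :=
    ht.mono_left (nhdsWithin_mono x fun y hy => ne_of_gt hy)
  refine ge_of_tendsto ht' ?_
  filter_upwards [self_mem_nhdsWithin] with y hy
  rw [slope_def_field]
  exact div_nonneg (sub_nonneg.2 (hm (Set.mem_Ioi.2 hx) (Set.mem_Ioi.2 (hx.trans hy)) hy.le))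
    (sub_nonneg.2 hy.le)

private lemma deriv_nonpos_of_antitoneOn_Ioi {f : ℝ → ℝ} {f' x : ℝ} (hx : 0 < x)
    (hm : AntitoneOn f (Set.Ioi 0)) (hd : HasDerivAt f f' x) : f' ≤ 0 := by
  have := deriv_nonneg_of_monotoneOn_Ioi hx hm.neg hd.neg
  linarith

private lemma plc_caseA (v₁ v₂ a b c d gv gvu guv : ℝ)
    (hv₁ : 0 < v₁) (hv₂ : 0 < v₂)
    (ha0 : a ≤ 0) (hb0 : b ≤ 0) (hc0 : c ≤ 0) (hd0 : d ≤ 0)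
    (hgv : 0 ≤ gv) (hgvu : 0 ≤ gvu) (hguv : 0 ≤ guv)
    (haL : -a ≤ 1) (hbL : -b ≤ 1)
    (hcL : -c ≤ v₁ * gv) (hdL : -d ≤ v₂ * gv) :
    gv + a * gv + b * gv + c * gvu + d * guv + a * c / v₁
      + a * d * guv + b * c * gvu + b * d / v₂ ≤ gv := by
  have h1 : a * c / v₁ ≤ -(a * gv) := by
    rw [div_le_iff₀ hv₁]
    have h : a * c ≤ a * (-(v₁ * gv)) := mul_le_mul_of_nonpos_left (by linarith) ha0
    nlinarith [h]
  have h2 : b * d / v₂ ≤ -(b * gv) := by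
    rw [div_le_iff₀ hv₂]
    have h : b * d ≤ b * (-(v₂ * gv)) := mul_le_mul_of_nonpos_left (by linarith) hb0
    nlinarith [h]
  have h3 : 0 ≤ (1 + b) * ((-c) * gvu) :=
    mul_nonneg (by linarith) (mul_nonneg (by linarith) hgvu)
  have h4 : 0 ≤ (1 + a) * ((-d) * guv) :=
    mul_nonneg (by linarith) (mul_nonneg (by linarith) hguv)
  nlinarith [h1, h2, h3, h4]

private lemma plc_caseB (v₁ u₂ a b c d gvv gvu guv guu : ℝ)
    (hv₁ : 0 < v₁) (hu₂ : 0 < u₂)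
    (ha0 : a ≤ 0) (hb0 : b ≤ 0) (hc0 : c ≤ 0) (hd0 : d ≤ 0)
    (hgvv : 0 ≤ gvv) (hgvu : 0 ≤ gvu)
    (hbL : -b ≤ 1)
    (hcL : -c ≤ v₁ * gvv) (hdL : -d ≤ u₂ * gvu)
    (h4pre : (-a) * guv ≤ guu) :
    gvu + a * gvv + b * gvu + c * gvu + d * guu + a * c / v₁
      + a * d * guv + b * c * gvu + b * d / u₂ ≤ gvu := by
  have h1 : a * c / v₁ ≤ -(a * gvv) := by
    rw [div_le_iff₀ hv₁]
    have h : a * c ≤ a * (-(v₁ * gvv)) := mul_le_mul_of_nonpos_left (by linarith) ha0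
    nlinarith [h]
  have h2 : b * d / u₂ ≤ -(b * gvu) := by
    rw [div_le_iff₀ hu₂]
    have h : b * d ≤ b * (-(u₂ * gvu)) := mul_le_mul_of_nonpos_left (by linarith) hb0
    nlinarith [h]
  have h3 : 0 ≤ (1 + b) * ((-c) * gvu) :=
    mul_nonneg (by linarith) (mul_nonneg (by linarith) hgvu)
  have h4 : a * d * guv ≤ (-d) * guu := by
    have h : (-d) * ((-a) * guv) ≤ (-d) * guu := mul_le_mul_of_nonneg_left h4pre (by linarith)
    nlinarith [h]
  nlinarith [h1, h2, h3, h4]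

/-- Asymptotic covariance comparison of the empirical and the oracle Pareto–Lévy copula
estimators: if the Pareto–Lévy copula `Γ` has continuous first-order partial derivatives
on `(0,∞)²` and `u₁ ↦ u₁Γ(u₁,u₂)` and `u₂ ↦ u₂Γ(u₁,u₂)` are nondecreasing, then the
covariance `K(u,v)` of the limiting field of the empirical estimator is dominated by the
covariance `Γ(u₁∨v₁,u₂∨v₂)` of the limiting field of the oracle estimator; in particular
`K(u,u) ≤ Γ(u)`. -/
theorem paretoLevyCopula_covariance_comparison (C : ParetoLevyCopula) (D₁ D₂ : ℝ → ℝ → ℝ)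
    (hD₁ : ∀ x y : ℝ, 0 < x → 0 < y →
      HasDerivAt (fun t : ℝ => plcReal C t y) (D₁ x y) x)
    (hD₂ : ∀ x y : ℝ, 0 < x → 0 < y →
      HasDerivAt (fun t : ℝ => plcReal C x t) (D₂ x y) y)
    (hD₁c : ContinuousOn (fun p : ℝ × ℝ => D₁ p.1 p.2) (Set.Ioi 0 ×ˢ Set.Ioi 0))
    (hD₂c : ContinuousOn (fun p : ℝ × ℝ => D₂ p.1 p.2) (Set.Ioi 0 ×ˢ Set.Ioi 0))
    (hmon₁ : ∀ y : ℝ, 0 < y → MonotoneOn (fun x : ℝ => x * plcReal C x y) (Set.Ioi 0))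
    (hmon₂ : ∀ x : ℝ, 0 < x → MonotoneOn (fun y : ℝ => y * plcReal C x y) (Set.Ioi 0)) :
    (∀ u v : ℝ × ℝ, 0 < u.1 → 0 < u.2 → 0 < v.1 → 0 < v.2 →
      plcKernel (plcReal C) D₁ D₂ u v ≤ plcReal C (max u.1 v.1) (max u.2 v.2)) ∧
    (∀ u : ℝ × ℝ, 0 < u.1 → 0 < u.2 →
      plcKernel (plcReal C) D₁ D₂ u u ≤ plcReal C u.1 u.2) := by
  -- basic facts about the restriction of the copula
  have hne : ∀ x : ℝ, 0 < x → ENNReal.ofReal x ≠ 0 := fun x hx => by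
    simp [ENNReal.ofReal_eq_zero, not_le, hx]
  have hnn : ∀ x y : ℝ, 0 < x → 0 < y → 0 ≤ plcReal C x y := fun x y hx hy =>
    C.nonneg _ _ (by simp [Prod.mk.injEq, hne x hx])
  have htop0 : C.toFun ⊤ 0 = 0 := by
    rw [C.margin_left ⊤ ENNReal.top_ne_zero]; simp
  have h0top : C.toFun 0 ⊤ = 0 := by
    rw [C.margin_right ⊤ ENNReal.top_ne_zero]; simp
  have hmarg : ∀ x : ℝ, 0 < x → C.toFun (ENNReal.ofReal x) 0 = x⁻¹ := fun x hx => by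
    rw [C.margin_left _ (hne x hx), ENNReal.toReal_inv, ENNReal.toReal_ofReal hx.le]
  have hmargr : ∀ y : ℝ, 0 < y → C.toFun 0 (ENNReal.ofReal y) = y⁻¹ := fun y hy => by
    rw [C.margin_right _ (hne y hy), ENNReal.toReal_inv, ENNReal.toReal_ofReal hy.le]
  have hx1 : ∀ x y : ℝ, 0 < x → 0 < y → plcReal C x y ≤ x⁻¹ := by
    intro x y hx hy
    have h := C.two_increasing (ENNReal.ofReal x) 0 ⊤ (ENNReal.ofReal y) le_top zero_le
      (by simp [Prod.mk.injEq, hne x hx])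
    rw [C.grounded_right _ (hne y hy), htop0, hmarg x hx] at h
    unfold plcReal; linarith
  have hy1 : ∀ x y : ℝ, 0 < x → 0 < y → plcReal C x y ≤ y⁻¹ := by
    intro x y hx hy
    have h := C.two_increasing 0 (ENNReal.ofReal y) (ENNReal.ofReal x) ⊤ zero_le le_top
      (by simp [Prod.mk.injEq, hne y hy])
    rw [C.grounded_left _ (hne x hx), h0top, hmargr y hy] at h
    unfold plcReal; linarith
  have hant1 : ∀ y : ℝ, 0 < y → AntitoneOn (fun x => plcReal C x y) (Set.Ioi 0) := by
    intro y hy s hs t ht hst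
    simp only
    have h := C.two_increasing (ENNReal.ofReal s) (ENNReal.ofReal y) (ENNReal.ofReal t) ⊤
      (ENNReal.ofReal_le_ofReal hst) le_top (by simp [Prod.mk.injEq, hne s hs])
    rw [C.grounded_left _ (hne t ht), C.grounded_left _ (hne s hs)] at h
    unfold plcReal; linarith
  have hant2 : ∀ x : ℝ, 0 < x → AntitoneOn (fun y => plcReal C x y) (Set.Ioi 0) := by
    intro x hx s hs t ht hst
    simp only
    have h := C.two_increasing (ENNReal.ofReal x) (ENNReal.ofReal s) ⊤ (ENNReal.ofReal t)
      le_top (ENNReal.ofReal_le_ofReal hst) (by simp [Prod.mk.injEq, hne x hx])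
    rw [C.grounded_right _ (hne t ht), C.grounded_right _ (hne s hs)] at h
    unfold plcReal; linarith
  -- derivative bounds
  have hD1np : ∀ x y : ℝ, 0 < x → 0 < y → D₁ x y ≤ 0 := fun x y hx hy =>
    deriv_nonpos_of_antitoneOn_Ioi hx (hant1 y hy) (hD₁ x y hx hy)
  have hD2np : ∀ x y : ℝ, 0 < x → 0 < y → D₂ x y ≤ 0 := fun x y hx hy =>
    deriv_nonpos_of_antitoneOn_Ioi hy (hant2 x hx) (hD₂ x y hx hy)
  have hD1lb : ∀ x y : ℝ, 0 < x → 0 < y → 0 ≤ plcReal C x y + x * D₁ x y := by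
    intro x y hx hy
    have hd : HasDerivAt (fun t : ℝ => t * plcReal C t y) (1 * plcReal C x y + x * D₁ x y) x :=
      (hasDerivAt_id' x).mul (hD₁ x y hx hy)
    have := deriv_nonneg_of_monotoneOn_Ioi hx (hmon₁ y hy) hd
    linarith
  have hD2lb : ∀ x y : ℝ, 0 < x → 0 < y → 0 ≤ plcReal C x y + y * D₂ x y := by
    intro x y hx hy
    have hd : HasDerivAt (fun t : ℝ => t * plcReal C x t) (1 * plcReal C x y + y * D₂ x y) y :=
      (hasDerivAt_id' y).mul (hD₂ x y hx hy)
    have := deriv_nonneg_of_monotoneOn_Ioi hy (hmon₂ x hx) hd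
    linarith
  -- scalar facts
  have hfa : ∀ x y : ℝ, 0 < x → 0 < y → x ^ 2 * D₁ x y ≤ 0 := fun x y hx hy => by
    have h := mul_le_mul_of_nonneg_left (hD1np x y hx hy) (sq_nonneg x)
    simpa using h
  have hfb : ∀ x y : ℝ, 0 < x → 0 < y → y ^ 2 * D₂ x y ≤ 0 := fun x y hx hy => by
    have h := mul_le_mul_of_nonneg_left (hD2np x y hx hy) (sq_nonneg y)
    simpa using h
  have hfaL : ∀ x y : ℝ, 0 < x → 0 < y → -(x ^ 2 * D₁ x y) ≤ x * plcReal C x y := by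
    intro x y hx hy
    have h := mul_nonneg hx.le (hD1lb x y hx hy)
    nlinarith [h]
  have hfbL : ∀ x y : ℝ, 0 < x → 0 < y → -(y ^ 2 * D₂ x y) ≤ y * plcReal C x y := by
    intro x y hx hy
    have h := mul_nonneg hy.le (hD2lb x y hx hy)
    nlinarith [h]
  have hone₁ : ∀ x y : ℝ, 0 < x → 0 < y → x * plcReal C x y ≤ 1 := by
    intro x y hx hy
    have h2 : x * plcReal C x y ≤ x * x⁻¹ :=
      mul_le_mul_of_nonneg_left (hx1 x y hx hy) hx.le
    rwa [mul_inv_cancel₀ hx.ne'] at h2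
  have hone₂ : ∀ x y : ℝ, 0 < x → 0 < y → y * plcReal C x y ≤ 1 := by
    intro x y hx hy
    have h2 : y * plcReal C x y ≤ y * y⁻¹ :=
      mul_le_mul_of_nonneg_left (hy1 x y hx hy) hy.le
    rwa [mul_inv_cancel₀ hy.ne'] at h2
  have hm2 : ∀ x s t : ℝ, 0 < x → 0 < s → s ≤ t →
      s * plcReal C x s ≤ t * plcReal C x t := fun x s t hx hs hst =>
    hmon₂ x hx (Set.mem_Ioi.2 hs) (Set.mem_Ioi.2 (hs.trans_le hst)) hst
  -- the key one-sided estimate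
  have key : ∀ u v : ℝ × ℝ, 0 < u.1 → 0 < u.2 → 0 < v.1 → 0 < v.2 → u.1 ≤ v.1 →
      plcKernel (plcReal C) D₁ D₂ u v ≤ plcReal C (max u.1 v.1) (max u.2 v.2) := by
    rintro ⟨u₁, u₂⟩ ⟨v₁, v₂⟩ hu₁ hu₂ hv₁ hv₂ h₁
    simp only [plcKernel] at *
    rw [max_eq_right h₁]
    rcases le_total u₂ v₂ with h₂ | h₂
    · rw [max_eq_right h₂]
      have main := plc_caseA v₁ v₂ (u₁ ^ 2 * D₁ u₁ u₂) (u₂ ^ 2 * D₂ u₁ u₂)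
        (v₁ ^ 2 * D₁ v₁ v₂) (v₂ ^ 2 * D₂ v₁ v₂)
        (plcReal C v₁ v₂) (plcReal C v₁ u₂) (plcReal C u₁ v₂) hv₁ hv₂
        (hfa u₁ u₂ hu₁ hu₂) (hfb u₁ u₂ hu₁ hu₂) (hfa v₁ v₂ hv₁ hv₂) (hfb v₁ v₂ hv₁ hv₂)
        (hnn v₁ v₂ hv₁ hv₂) (hnn v₁ u₂ hv₁ hu₂) (hnn u₁ v₂ hu₁ hv₂)
        (by linarith [hfaL u₁ u₂ hu₁ hu₂, hone₁ u₁ u₂ hu₁ hu₂])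
        (by linarith [hfbL u₁ u₂ hu₁ hu₂, hone₂ u₁ u₂ hu₁ hu₂])
        (hfaL v₁ v₂ hv₁ hv₂) (hfbL v₁ v₂ hv₁ hv₂)
      ring_nf at main ⊢; linarith [main]
    · rw [max_eq_left h₂]
      have h4pre : (-(u₁ ^ 2 * D₁ u₁ u₂)) * plcReal C u₁ v₂ ≤ plcReal C u₁ u₂ := by
        have t1 : (-(u₁ ^ 2 * D₁ u₁ u₂)) * plcReal C u₁ v₂ ≤
            (u₁ * plcReal C u₁ u₂) * plcReal C u₁ v₂ :=
          mul_le_mul_of_nonneg_right (hfaL u₁ u₂ hu₁ hu₂) (hnn u₁ v₂ hu₁ hv₂)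
        have t3 : plcReal C u₁ u₂ * (u₁ * plcReal C u₁ v₂) ≤ plcReal C u₁ u₂ * 1 :=
          mul_le_mul_of_nonneg_left (hone₁ u₁ v₂ hu₁ hv₂) (hnn u₁ u₂ hu₁ hu₂)
        nlinarith [t1, t3]
      have hdL : -(v₂ ^ 2 * D₂ v₁ v₂) ≤ u₂ * plcReal C v₁ u₂ := by
        have t1 := hfbL v₁ v₂ hv₁ hv₂
        have t2 := hm2 v₁ v₂ u₂ hv₁ hv₂ h₂
        linarith
      have main := plc_caseB v₁ u₂ (u₁ ^ 2 * D₁ u₁ u₂) (u₂ ^ 2 * D₂ u₁ u₂)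
        (v₁ ^ 2 * D₁ v₁ v₂) (v₂ ^ 2 * D₂ v₁ v₂)
        (plcReal C v₁ v₂) (plcReal C v₁ u₂) (plcReal C u₁ v₂) (plcReal C u₁ u₂) hv₁ hu₂
        (hfa u₁ u₂ hu₁ hu₂) (hfb u₁ u₂ hu₁ hu₂) (hfa v₁ v₂ hv₁ hv₂) (hfb v₁ v₂ hv₁ hv₂)
        (hnn v₁ v₂ hv₁ hv₂) (hnn v₁ u₂ hv₁ hu₂)
        (by linarith [hfbL u₁ u₂ hu₁ hu₂, hone₂ u₁ u₂ hu₁ hu₂])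
        (hfaL v₁ v₂ hv₁ hv₂) hdL h4pre
      ring_nf at main ⊢; linarith [main]
  -- symmetry of the kernel
  have ksymm : ∀ u v : ℝ × ℝ,
      plcKernel (plcReal C) D₁ D₂ u v = plcKernel (plcReal C) D₁ D₂ v u := by
    intro u v
    simp only [plcKernel]
    rw [max_comm v.1 u.1, max_comm v.2 u.2]
    ring
  constructor
  · intro u v hu1 hu2 hv1 hv2
    rcases le_total u.1 v.1 with h | h
    · exact key u v hu1 hu2 hv1 hv2 h
    · rw [ksymm u v, max_comm u.1 v.1, max_comm u.2 v.2]
      exact key v u hv1 hv2 hu1 hu2 h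
  · intro u hu1 hu2
    have h := key u u hu1 hu2 hu1 hu2 le_rfl
    simpa using h
end

section
/- Let Γ = Γ_{1/2} be the Clayton Pareto–Lévy copula with parameter θ = 1/2, i.e. Γ(u₁,u₂) = (√u₁ + √u₂)^{−2} on (0,∞)², and let K be the asymptotic covariance kernel built from Γ. Then for every x > 0, Γ(x,x) = 1/(4x) and K((x,x),(x,x)) = 21/(128x); consequently the asymptotic relative efficiency on the diagonal equals K((x,x),(x,x))/Γ(x,x) = 21/32. -/
/-- The Clayton Pareto–Lévy copula with parameter `θ = 1/2`:
`Γ(u₁,u₂) = (√u₁ + √u₂)^(−2)` on `(0,∞)²`. -/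
noncomputable def claytonHalf (x y : ℝ) : ℝ := ((Real.sqrt x + Real.sqrt y) ^ 2)⁻¹

/-- First partial derivative of `claytonHalf`. -/
noncomputable def claytonHalfD₁ (x y : ℝ) : ℝ := deriv (fun t : ℝ => claytonHalf t y) x

/-- Second partial derivative of `claytonHalf`. -/
noncomputable def claytonHalfD₂ (x y : ℝ) : ℝ := deriv (fun t : ℝ => claytonHalf x t) y

lemma claytonHalf_diag (x : ℝ) (hx : 0 < x) : claytonHalf x x = 1 / (4 * x) := by
  have hs : Real.sqrt x ^ 2 = x := Real.sq_sqrt hx.le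
  unfold claytonHalf
  rw [one_div]
  congr 1
  ring_nf
  nlinarith [hs]

lemma claytonHalfD₁_diag (x : ℝ) (hx : 0 < x) : claytonHalfD₁ x x = -1 / (8 * x ^ 2) := by
  have hs : Real.sqrt x ^ 2 = x := Real.sq_sqrt hx.le
  have hsne : Real.sqrt x ≠ 0 := (Real.sqrt_pos.mpr hx).ne'
  have h1 : HasDerivAt Real.sqrt (1 / (2 * Real.sqrt x)) x := Real.hasDerivAt_sqrt hx.ne'
  have h2 : HasDerivAt (fun t : ℝ => Real.sqrt t + Real.sqrt x) (1 / (2 * Real.sqrt x)) x :=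
    h1.add_const _
  have h3 := h2.pow 2
  have hne : (Real.sqrt x + Real.sqrt x) ^ 2 ≠ 0 := by positivity
  have h4 := h3.inv hne
  have := h4.deriv
  unfold claytonHalfD₁ claytonHalf
  erw [this]
  simp only [Pi.pow_apply]
  field_simp
  linear_combination (32 * Real.sqrt x * (Real.sqrt x ^ 2 + x)) * hs

lemma claytonHalfD₂_diag (x : ℝ) (hx : 0 < x) : claytonHalfD₂ x x = -1 / (8 * x ^ 2) := by
  have h : claytonHalfD₂ x x = claytonHalfD₁ x x := by
    unfold claytonHalfD₂ claytonHalfD₁ claytonHalf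
    simp [add_comm]
  rw [h]; exact claytonHalfD₁_diag x hx

/-- For the Clayton Pareto–Lévy copula with `θ = 1/2`, the diagonal values of the copula
and of the asymptotic covariance kernel are `Γ(x,x) = 1/(4x)` and
`K((x,x),(x,x)) = 21/(128x)`; hence the asymptotic relative efficiency on the diagonal is
`21/32`. -/
theorem claytonHalf_diagonal_variance (x : ℝ) (hx : 0 < x) :
    claytonHalf x x = 1 / (4 * x) ∧
    plcKernel claytonHalf claytonHalfD₁ claytonHalfD₂ (x, x) (x, x) = 21 / (128 * x) ∧
    plcKernel claytonHalf claytonHalfD₁ claytonHalfD₂ (x, x) (x, x) / claytonHalf x x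
      = 21 / 32 := by
  have hg := claytonHalf_diag x hx
  have h1 := claytonHalfD₁_diag x hx
  have h2 := claytonHalfD₂_diag x hx
  have hK : plcKernel claytonHalf claytonHalfD₁ claytonHalfD₂ (x, x) (x, x) = 21 / (128 * x) := by
    unfold plcKernel
    simp only [max_self, hg, h1, h2]
    field_simp
    ring
  exact ⟨hg, hK, by rw [hK, hg]; field_simp; ring⟩
end

section
/- Let Γ = Γ_{1/2} be the Clayton Pareto–Lévy copula with parameter θ = 1/2, i.e. Γ(u₁,u₂) = (√u₁ + √u₂)^{−2} on (0,∞)², and let K be the asymptotic covariance kernel built from Γ. Then for all x ≥ y > 0, K((x,x),(y,y)) = (7/32)·(1/x − (√x + √y)^{−2}). -/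
lemma deriv_aux (c : ℝ) (hc : 0 ≤ c) (x : ℝ) (hx : 0 < x) :
    deriv (fun t : ℝ => ((Real.sqrt t + c) ^ 2)⁻¹) x
      = -(Real.sqrt x * (Real.sqrt x + c) ^ 3)⁻¹ := by
  have hsx : 0 < Real.sqrt x := Real.sqrt_pos.mpr hx
  have hsum : 0 < Real.sqrt x + c := by linarith
  have h1 : HasDerivAt (fun t : ℝ => Real.sqrt t + c) (1 / (2 * Real.sqrt x)) x :=
    (Real.hasDerivAt_sqrt hx.ne').add_const c
  have h2 := h1.pow 2
  have h3 := h2.inv (by positivity : (Real.sqrt x + c) ^ 2 ≠ 0)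
  rw [show (fun t : ℝ => ((Real.sqrt t + c) ^ 2)⁻¹) = ((fun t : ℝ => Real.sqrt t + c) ^ 2)⁻¹ from rfl, h3.deriv, Pi.pow_apply]
  field_simp
  ring

lemma claytonHalfD₁_eq (x y : ℝ) (hx : 0 < x) (hy : 0 ≤ y) :
    claytonHalfD₁ x y = -(Real.sqrt x * (Real.sqrt x + Real.sqrt y) ^ 3)⁻¹ := by
  unfold claytonHalfD₁ claytonHalf
  exact deriv_aux (Real.sqrt y) (Real.sqrt_nonneg y) x hx

lemma claytonHalfD₂_eq (x y : ℝ) (hx : 0 ≤ x) (hy : 0 < y) :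
    claytonHalfD₂ x y = -(Real.sqrt y * (Real.sqrt x + Real.sqrt y) ^ 3)⁻¹ := by
  unfold claytonHalfD₂ claytonHalf
  have hfun : (fun t : ℝ => ((Real.sqrt x + Real.sqrt t) ^ 2)⁻¹)
      = fun t : ℝ => ((Real.sqrt t + Real.sqrt x) ^ 2)⁻¹ := by
    funext t; rw [add_comm]
  rw [hfun, deriv_aux (Real.sqrt x) (Real.sqrt_nonneg x) y hy, add_comm]

/-- For the Clayton Pareto–Lévy copula with `θ = 1/2`, the asymptotic covariance kernel
satisfies `K((x,x),(y,y)) = (7/32)·(1/x − (√x + √y)^(−2))` for all `x ≥ y > 0`. -/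
theorem claytonHalf_diagonal_covariance (x y : ℝ) (hy : 0 < y) (hxy : y ≤ x) :
    plcKernel claytonHalf claytonHalfD₁ claytonHalfD₂ (x, x) (y, y)
      = (7 / 32) * (1 / x - ((Real.sqrt x + Real.sqrt y) ^ 2)⁻¹) := by
  have hx : 0 < x := lt_of_lt_of_le hy hxy
  have hmax : max x y = x := max_eq_left hxy
  set s := Real.sqrt x with hs
  set t := Real.sqrt y with ht
  have hsp : 0 < s := Real.sqrt_pos.mpr hx
  have htp : 0 < t := Real.sqrt_pos.mpr hy
  have hs2 : s ^ 2 = x := Real.sq_sqrt hx.le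
  have ht2 : t ^ 2 = y := Real.sq_sqrt hy.le
  simp only [plcKernel, claytonHalf, hmax, max_self,
    claytonHalfD₁_eq x x hx hx.le, claytonHalfD₁_eq y y hy hy.le,
    claytonHalfD₂_eq x x hx.le hx, claytonHalfD₂_eq y y hy.le hy, ← hs, ← ht]
  rw [← hs2, ← ht2]
  have hst : 0 < s + t := by linarith
  field_simp
  ring
end

section
/- Let ν be a Borel measure on ℝ² concentrated on (0,∞)² with ∫ min(‖u‖²,1) dν(u) < ∞. Define the tail integral U(x₁,x₂) = ν([x₁,∞)×[x₂,∞)) for (x₁,x₂) ∈ (0,∞)² and the marginal tail integrals U₁(x) = ν([x,∞)×(0,∞)) and U₂(x) = ν((0,∞)×[x,∞)) for x ∈ (0,∞). Assume U₁ and U₂ are continuous, strictly decreasing bijections from (0,∞) onto (0,∞). Define Γ(u₁,u₂) = U(U₁^{−1}(1/u₁), U₂^{−1}(1/u₂)) for (u₁,u₂) ∈ (0,∞)². Then: (a) Γ is 2-increasing on (0,∞)²; (b) U(x₁,x₂) = Γ(1/U₁(x₁), 1/U₂(x₂)) for all (x₁,x₂) ∈ (0,∞)²; (c) for every u₁ ∈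 (0,∞), lim_{u₂→0+} Γ(u₁,u₂) = 1/u₁ and lim_{u₂→∞} Γ(u₁,u₂) = 0, and symmetrically in the other coordinate. -/
open MeasureTheory

section PLCHelpers
open Set Filter

lemma PLC.fin_aux (ν : Measure (ℝ × ℝ))
    (hint : ∫⁻ u : ℝ × ℝ, ENNReal.ofReal (min (‖u‖ ^ 2) 1) ∂ν ≠ ⊤)
    {S : Set (ℝ × ℝ)} {x : ℝ} (hx : 0 < x) (hS : ∀ u ∈ S, x ≤ ‖u‖) : ν S ≠ ⊤ := by
  set f : ℝ × ℝ → ENNReal := fun u => ENNReal.ofReal (min (‖u‖ ^ 2) 1) with hf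
  have hmeas : AEMeasurable f ν := by
    refine Continuous.aemeasurable ?_
    exact ENNReal.continuous_ofReal.comp (((continuous_norm.pow 2).min continuous_const))
  set ε : ENNReal := ENNReal.ofReal (min (x ^ 2) 1) with hε
  have hε0 : ε ≠ 0 := by
    simp only [hε, ne_eq, ENNReal.ofReal_eq_zero, not_le]
    positivity
  have hεt : ε ≠ ⊤ := ENNReal.ofReal_ne_top
  have hsub : S ⊆ {u | ε ≤ f u} := by
    intro u hu
    have h1 : x ≤ ‖u‖ := hS u hu
    have : x ^ 2 ≤ ‖u‖ ^ 2 := by nlinarith [norm_nonneg u]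
    exact ENNReal.ofReal_le_ofReal (min_le_min this le_rfl)
  have := (measure_mono hsub).trans (meas_ge_le_lintegral_div hmeas hε0 hεt)
  exact ne_top_of_le_ne_top (ENNReal.div_lt_top hint hε0).ne this

lemma PLC.fin₁ (ν : Measure (ℝ × ℝ))
    (hint : ∫⁻ u : ℝ × ℝ, ENNReal.ofReal (min (‖u‖ ^ 2) 1) ∂ν ≠ ⊤)
    {x : ℝ} (hx : 0 < x) : ν (Set.Ici x ×ˢ Set.Ioi 0) ≠ ⊤ := by
  refine PLC.fin_aux ν hint hx ?_
  rintro ⟨a, b⟩ ⟨h1, _⟩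
  calc x ≤ a := h1
    _ ≤ |a| := le_abs_self a
    _ ≤ ‖(a, b)‖ := by rw [Prod.norm_def]; exact le_max_of_le_left (le_of_eq (Real.norm_eq_abs a).symm)

lemma PLC.fin₂ (ν : Measure (ℝ × ℝ))
    (hint : ∫⁻ u : ℝ × ℝ, ENNReal.ofReal (min (‖u‖ ^ 2) 1) ∂ν ≠ ⊤)
    {x : ℝ} (hx : 0 < x) : ν (Set.Ioi 0 ×ˢ Set.Ici x) ≠ ⊤ := by
  refine PLC.fin_aux ν hint hx ?_
  rintro ⟨a, b⟩ ⟨_, h2⟩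
  calc x ≤ b := h2
    _ ≤ |b| := le_abs_self b
    _ ≤ ‖(a, b)‖ := by rw [Prod.norm_def]; exact le_max_of_le_right (le_of_eq (Real.norm_eq_abs b).symm)

lemma PLC.split_left (ν : Measure (ℝ × ℝ)) {a b : ℝ} (h : a ≤ b) {C : Set ℝ}
    (hC : MeasurableSet C) :
    ν (Ici a ×ˢ C) = ν (Ico a b ×ˢ C) + ν (Ici b ×ˢ C) := by
  rw [← Ico_union_Ici_eq_Ici h, union_prod]
  refine measure_union ?_ (measurableSet_Ici.prod hC)
  rw [Set.disjoint_left]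
  rintro ⟨p, q⟩ ⟨hp, _⟩ ⟨hp', _⟩
  exact hp.2.not_ge hp'

lemma PLC.split_right (ν : Measure (ℝ × ℝ)) {a b : ℝ} (h : a ≤ b) {C : Set ℝ}
    (hC : MeasurableSet C) :
    ν (C ×ˢ Ici a) = ν (C ×ˢ Ico a b) + ν (C ×ˢ Ici b) := by
  rw [← Ico_union_Ici_eq_Ici h, prod_union]
  refine measure_union ?_ (hC.prod measurableSet_Ici)
  rw [Set.disjoint_left]
  rintro ⟨p, q⟩ ⟨_, hq⟩ ⟨_, hq'⟩
  exact hq.2.not_ge hq'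

lemma PLC.twoInc (ν : Measure (ℝ × ℝ)) {a₁ b₁ a₂ b₂ : ℝ} (h₁ : a₁ ≤ b₁) (h₂ : a₂ ≤ b₂)
    (hfin : ν (Ici a₁ ×ˢ Ici a₂) ≠ ⊤) :
    0 ≤ (ν (Ici b₁ ×ˢ Ici b₂)).toReal - (ν (Ici b₁ ×ˢ Ici a₂)).toReal
      - (ν (Ici a₁ ×ˢ Ici b₂)).toReal + (ν (Ici a₁ ×ˢ Ici a₂)).toReal := by
  have fin : ∀ S : Set (ℝ × ℝ), S ⊆ Ici a₁ ×ˢ Ici a₂ → ν S ≠ ⊤ := fun S hS =>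
    ne_top_of_le_ne_top hfin (measure_mono hS)
  have e1 : ν (Ici a₁ ×ˢ Ici a₂) = ν (Ico a₁ b₁ ×ˢ Ici a₂) + ν (Ici b₁ ×ˢ Ici a₂) :=
    PLC.split_left ν h₁ measurableSet_Ici
  have e2 : ν (Ici a₁ ×ˢ Ici b₂) = ν (Ico a₁ b₁ ×ˢ Ici b₂) + ν (Ici b₁ ×ˢ Ici b₂) :=
    PLC.split_left ν h₁ measurableSet_Ici
  have e3 : ν (Ico a₁ b₁ ×ˢ Ici a₂) = ν (Ico a₁ b₁ ×ˢ Ico a₂ b₂) + ν (Ico a₁ b₁ ×ˢ Ici b₂) :=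
    PLC.split_right ν h₂ measurableSet_Ico
  have fA : ν (Ico a₁ b₁ ×ˢ Ico a₂ b₂) ≠ ⊤ :=
    fin _ (prod_mono Ico_subset_Ici_self Ico_subset_Ici_self)
  have fB : ν (Ico a₁ b₁ ×ˢ Ici b₂) ≠ ⊤ :=
    fin _ (prod_mono Ico_subset_Ici_self (Ici_subset_Ici.mpr h₂))
  have fC : ν (Ici b₁ ×ˢ Ici a₂) ≠ ⊤ :=
    fin _ (prod_mono (Ici_subset_Ici.mpr h₁) Subset.rfl)
  have fS : ν (Ici b₁ ×ˢ Ici b₂) ≠ ⊤ :=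
    fin _ (prod_mono (Ici_subset_Ici.mpr h₁) (Ici_subset_Ici.mpr h₂))
  have r3 : (ν (Ico a₁ b₁ ×ˢ Ici a₂)).toReal
      = (ν (Ico a₁ b₁ ×ˢ Ico a₂ b₂)).toReal + (ν (Ico a₁ b₁ ×ˢ Ici b₂)).toReal := by
    rw [e3, ENNReal.toReal_add fA fB]
  have r1 : (ν (Ici a₁ ×ˢ Ici a₂)).toReal
      = (ν (Ico a₁ b₁ ×ˢ Ici a₂)).toReal + (ν (Ici b₁ ×ˢ Ici a₂)).toReal := by
    rw [e1, ENNReal.toReal_add (fin _ (prod_mono Ico_subset_Ici_self Subset.rfl)) fC]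
  have r2 : (ν (Ici a₁ ×ˢ Ici b₂)).toReal
      = (ν (Ico a₁ b₁ ×ˢ Ici b₂)).toReal + (ν (Ici b₁ ×ˢ Ici b₂)).toReal := by
    rw [e2, ENNReal.toReal_add fB fS]
  have hA : 0 ≤ (ν (Ico a₁ b₁ ×ˢ Ico a₂ b₂)).toReal := ENNReal.toReal_nonneg
  linarith

lemma PLC.Vanti {U V : ℝ → ℝ} (hUanti : StrictAntiOn U (Ioi 0))
    (hV' : ∀ y ∈ Ioi (0:ℝ), V y ∈ Ioi (0:ℝ) ∧ U (V y) = y) :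
    ∀ y ∈ Ioi (0:ℝ), ∀ z ∈ Ioi (0:ℝ), y ≤ z → V z ≤ V y := by
  intro y hy z hz hyz
  by_contra h
  push_neg at h
  have := hUanti (hV' y hy).1 (hV' z hz).1 h
  rw [(hV' y hy).2, (hV' z hz).2] at this
  exact absurd hyz (not_le.mpr this)

lemma PLC.limit_zero (ν : Measure (ℝ × ℝ))
    (hfin : ∀ x : ℝ, 0 < x → ν (Ici x ×ˢ Ioi 0) ≠ ⊤)
    (U V : ℝ → ℝ)
    (hUanti : StrictAntiOn U (Ioi 0))
    (hVU : ∀ x ∈ Ioi (0:ℝ), V (U x) = x)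
    (hUpos : ∀ x ∈ Ioi (0:ℝ), U x ∈ Ioi (0:ℝ))
    (hV' : ∀ y ∈ Ioi (0:ℝ), V y ∈ Ioi (0:ℝ) ∧ U (V y) = y)
    {a : ℝ} (ha : 0 < a) :
    Tendsto (fun t : ℝ => (ν (Ici a ×ˢ Ici (V (1/t)))).toReal) (nhdsWithin 0 (Ioi 0))
      (nhds ((ν (Ici a ×ˢ Ioi 0)).toReal)) := by
  have hanti := PLC.Vanti hUanti hV'
  rw [Metric.tendsto_nhdsWithin_nhds]
  intro ε hε
  -- shrinking sets
  set s : ℕ → Set (ℝ × ℝ) := fun n => Ici a ×ˢ Ioo 0 (1/((n:ℝ)+1)) with hs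
  have hmeas : ∀ n, NullMeasurableSet (s n) ν := fun n =>
    (measurableSet_Ici.prod measurableSet_Ioo).nullMeasurableSet
  have hmono : Antitone s := by
    intro n m hnm
    refine prod_mono Subset.rfl (Ioo_subset_Ioo_right ?_)
    have : (n:ℝ) + 1 ≤ (m:ℝ) + 1 := by exact_mod_cast Nat.succ_le_succ hnm
    exact one_div_le_one_div_of_le (by positivity) this
  have hone : ∃ n, ν (s n) ≠ ⊤ := ⟨0, ne_top_of_le_ne_top (hfin a ha)
    (measure_mono (prod_mono Subset.rfl Ioo_subset_Ioi_self))⟩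
  have hempty : ⋂ n, s n = ∅ := by
    rw [eq_empty_iff_forall_notMem]
    rintro ⟨p, q⟩ hpq
    simp only [hs, mem_iInter, mem_prod, mem_Ioo] at hpq
    obtain ⟨n, hn⟩ := exists_nat_gt (1/q)
    have hq : 0 < q := (hpq 0).2.1
    have h1 : 1/q < (n:ℝ) + 1 := hn.trans (by linarith)
    have := (hpq n).2.2
    rw [div_lt_iff₀ hq] at h1
    rw [lt_div_iff₀ (by positivity)] at this
    nlinarith
  have htend := MeasureTheory.tendsto_measure_iInter_atTop (μ := ν) hmeas hmono hone
  rw [hempty, measure_empty] at htend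
  have hev : ∀ᶠ n in atTop, ν (s n) < ENNReal.ofReal ε :=
    htend (ENNReal.nhds_zero_basis.mem_of_mem (by simp [hε]))
  obtain ⟨N, hN⟩ := hev.exists
  set b : ℝ := 1/((N:ℝ)+1) with hbdef
  have hb : 0 < b := by positivity
  have hUb : U b ∈ Ioi 0 := hUpos b hb
  refine ⟨1/(U b), one_div_pos.mpr hUb, ?_⟩
  intro t ht hdist
  have ht0 : 0 < t := ht
  have htd : t < 1/(U b) := by rwa [Real.dist_eq, sub_zero, abs_of_pos ht0] at hdist
  have h1t : U b < 1/t := by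
    have := one_div_lt_one_div_of_lt ht0 htd
    rwa [one_div_one_div] at this
  have h1tpos : (0:ℝ) < 1/t := by positivity
  have hc := hV' (1/t) h1tpos
  set c := V (1/t) with hcdef
  have hcpos : 0 < c := hc.1
  have hcb : c ≤ b := by
    have := hanti (U b) hUb (1/t) h1tpos (le_of_lt h1t)
    rwa [hVU b hb] at this
  have hsplit : ν (Ici a ×ˢ Ioi 0) = ν (Ici a ×ˢ Ioo 0 c) + ν (Ici a ×ˢ Ici c) := by
    rw [← Ioo_union_Ici_eq_Ioi hcpos, prod_union]
    refine measure_union ?_ (measurableSet_Ici.prod measurableSet_Ici)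
    rw [Set.disjoint_left]
    rintro ⟨p, q⟩ ⟨_, hq⟩ ⟨_, hq'⟩
    exact hq.2.not_ge hq'
  have f1 : ν (Ici a ×ˢ Ioo 0 c) ≠ ⊤ := ne_top_of_le_ne_top (hfin a ha)
    (measure_mono (prod_mono Subset.rfl Ioo_subset_Ioi_self))
  have f2 : ν (Ici a ×ˢ Ici c) ≠ ⊤ := ne_top_of_le_ne_top (hfin a ha)
    (measure_mono (prod_mono Subset.rfl (Ici_subset_Ioi.mpr hcpos)))
  have hr : (ν (Ici a ×ˢ Ioi 0)).toReal
      = (ν (Ici a ×ˢ Ioo 0 c)).toReal + (ν (Ici a ×ˢ Ici c)).toReal := by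
    rw [hsplit, ENNReal.toReal_add f1 f2]
  have hle : (ν (Ici a ×ˢ Ioo 0 c)).toReal ≤ (ν (s N)).toReal :=
    ENNReal.toReal_mono hN.ne_top
      (measure_mono (prod_mono Subset.rfl (Ioo_subset_Ioo_right hcb)))
  have hsN : (ν (s N)).toReal < ε := by
    rw [← ENNReal.lt_ofReal_iff_toReal_lt hN.ne_top]
    exact hN
  rw [Real.dist_eq, hr]
  have heq : (ν (Ici a ×ˢ Ici c)).toReal
      - ((ν (Ici a ×ˢ Ioo 0 c)).toReal + (ν (Ici a ×ˢ Ici c)).toReal)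
      = -(ν (Ici a ×ˢ Ioo 0 c)).toReal := by ring
  rw [heq, abs_neg, abs_of_nonneg ENNReal.toReal_nonneg]
  linarith

lemma PLC.limit_top (ν : Measure (ℝ × ℝ))
    (hfin : ∀ x : ℝ, 0 < x → ν (Ici x ×ˢ Ioi 0) ≠ ⊤)
    (U V : ℝ → ℝ)
    (hUanti : StrictAntiOn U (Ioi 0))
    (hVU : ∀ x ∈ Ioi (0:ℝ), V (U x) = x)
    (hUpos : ∀ x ∈ Ioi (0:ℝ), U x ∈ Ioi (0:ℝ))
    (hV' : ∀ y ∈ Ioi (0:ℝ), V y ∈ Ioi (0:ℝ) ∧ U (V y) = y)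
    {a : ℝ} (ha : 0 < a) :
    Tendsto (fun t : ℝ => (ν (Ici a ×ˢ Ici (V (1/t)))).toReal) atTop (nhds 0) := by
  have hanti := PLC.Vanti hUanti hV'
  rw [Metric.tendsto_atTop]
  intro ε hε
  set s : ℕ → Set (ℝ × ℝ) := fun n => Ici a ×ˢ Ici ((n:ℝ)+1) with hs
  have hmeas : ∀ n, NullMeasurableSet (s n) ν := fun n =>
    (measurableSet_Ici.prod measurableSet_Ici).nullMeasurableSet
  have hmono : Antitone s := by
    intro n m hnm
    refine prod_mono Subset.rfl (Ici_subset_Ici.mpr ?_)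
    exact_mod_cast Nat.succ_le_succ hnm
  have hone : ∃ n, ν (s n) ≠ ⊤ := ⟨0, ne_top_of_le_ne_top (hfin a ha)
    (measure_mono (prod_mono Subset.rfl (Ici_subset_Ioi.mpr (by norm_num))))⟩
  have hempty : ⋂ n, s n = ∅ := by
    rw [eq_empty_iff_forall_notMem]
    rintro ⟨p, q⟩ hpq
    simp only [hs, mem_iInter, mem_prod, mem_Ici] at hpq
    obtain ⟨n, hn⟩ := exists_nat_gt q
    have := (hpq n).2
    linarith
  have htend := MeasureTheory.tendsto_measure_iInter_atTop (μ := ν) hmeas hmono hone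
  rw [hempty, measure_empty] at htend
  have hev : ∀ᶠ n in atTop, ν (s n) < ENNReal.ofReal ε :=
    htend (ENNReal.nhds_zero_basis.mem_of_mem (by simp [hε]))
  obtain ⟨N, hN⟩ := hev.exists
  set b : ℝ := (N:ℝ)+1 with hbdef
  have hb : 0 < b := by positivity
  have hUb : U b ∈ Ioi 0 := hUpos b hb
  refine ⟨max 1 (1/(U b)), ?_⟩
  intro t ht
  have ht1 : (1:ℝ) ≤ t := le_trans (le_max_left _ _) ht
  have ht0 : (0:ℝ) < t := lt_of_lt_of_le one_pos ht1
  have htd : 1/(U b) ≤ t := le_trans (le_max_right _ _) ht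
  have h1t : 1/t ≤ U b := by
    have := one_div_le_one_div_of_le (one_div_pos.mpr hUb) htd
    rwa [one_div_one_div] at this
  have h1tpos : (0:ℝ) < 1/t := by positivity
  have hc := hV' (1/t) h1tpos
  have hbc : b ≤ V (1/t) := by
    have := hanti (1/t) h1tpos (U b) hUb h1t
    rwa [hVU b hb] at this
  have hle : ν (Ici a ×ˢ Ici (V (1/t))) ≤ ν (s N) :=
    measure_mono (prod_mono Subset.rfl (Ici_subset_Ici.mpr hbc))
  have : (ν (Ici a ×ˢ Ici (V (1/t)))).toReal < ε := by
    rw [← ENNReal.lt_ofReal_iff_toReal_lt (ne_top_of_le_ne_top hN.ne_top hle)]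
    exact lt_of_le_of_lt hle hN
  rw [Real.dist_eq, sub_zero, abs_of_nonneg ENNReal.toReal_nonneg]
  exact this

end PLCHelpers

/-- The bivariate tail integral `U(x₁,x₂) = ν([x₁,∞)×[x₂,∞))` of a measure on `ℝ²`. -/
noncomputable def tailIntegral (ν : Measure (ℝ × ℝ)) (x₁ x₂ : ℝ) : ℝ :=
  (ν (Set.Ici x₁ ×ˢ Set.Ici x₂)).toReal

/-- The first marginal tail integral `U₁(x) = ν([x,∞)×(0,∞))`. -/
noncomputable def tailIntegral₁ (ν : Measure (ℝ × ℝ)) (x : ℝ) : ℝ :=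
  (ν (Set.Ici x ×ˢ Set.Ioi 0)).toReal

/-- The second marginal tail integral `U₂(x) = ν((0,∞)×[x,∞))`. -/
noncomputable def tailIntegral₂ (ν : Measure (ℝ × ℝ)) (x : ℝ) : ℝ :=
  (ν (Set.Ioi 0 ×ˢ Set.Ici x)).toReal

/-- Sklar-type properties of the Pareto–Lévy copula
`Γ(u₁,u₂) = U(U₁⁻¹(1/u₁), U₂⁻¹(1/u₂))` of a Lévy measure `ν` concentrated on `(0,∞)²`
whose marginal tail integrals are continuous strictly decreasing bijections of `(0,∞)`:
(a) `Γ` is 2-increasing on `(0,∞)²`; (b) `U(x₁,x₂) = Γ(1/U₁(x₁), 1/U₂(x₂))`;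
(c) `Γ(u₁,u₂) → 1/u₁` as `u₂ → 0+`, `Γ(u₁,u₂) → 0` as `u₂ → ∞`, and symmetrically. -/
theorem paretoLevyCopula_of_levyMeasure (ν : Measure (ℝ × ℝ))
    (hconc : ν ((Set.Ioi (0 : ℝ) ×ˢ Set.Ioi (0 : ℝ))ᶜ) = 0)
    (hint : ∫⁻ u : ℝ × ℝ, ENNReal.ofReal (min (‖u‖ ^ 2) 1) ∂ν ≠ ⊤)
    (hU₁cont : ContinuousOn (tailIntegral₁ ν) (Set.Ioi 0))
    (hU₂cont : ContinuousOn (tailIntegral₂ ν) (Set.Ioi 0))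
    (hU₁anti : StrictAntiOn (tailIntegral₁ ν) (Set.Ioi 0))
    (hU₂anti : StrictAntiOn (tailIntegral₂ ν) (Set.Ioi 0))
    (hU₁bij : Set.BijOn (tailIntegral₁ ν) (Set.Ioi 0) (Set.Ioi 0))
    (hU₂bij : Set.BijOn (tailIntegral₂ ν) (Set.Ioi 0) (Set.Ioi 0))
    (V₁ V₂ : ℝ → ℝ)
    (hV₁ : ∀ x ∈ Set.Ioi (0 : ℝ), V₁ (tailIntegral₁ ν x) = x)
    (hV₂ : ∀ x ∈ Set.Ioi (0 : ℝ), V₂ (tailIntegral₂ ν x) = x)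
    (hV₁' : ∀ y ∈ Set.Ioi (0 : ℝ), V₁ y ∈ Set.Ioi (0 : ℝ) ∧ tailIntegral₁ ν (V₁ y) = y)
    (hV₂' : ∀ y ∈ Set.Ioi (0 : ℝ), V₂ y ∈ Set.Ioi (0 : ℝ) ∧ tailIntegral₂ ν (V₂ y) = y)
    (Γ : ℝ → ℝ → ℝ)
    (hΓ : ∀ u₁ u₂ : ℝ, Γ u₁ u₂ = tailIntegral ν (V₁ (1 / u₁)) (V₂ (1 / u₂))) :
    -- (a) `Γ` is 2-increasing on `(0,∞)²`
    (∀ u₁ u₂ v₁ v₂ : ℝ, 0 < u₁ → 0 < u₂ → u₁ ≤ v₁ → u₂ ≤ v₂ →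
      0 ≤ Γ v₁ v₂ - Γ v₁ u₂ - Γ u₁ v₂ + Γ u₁ u₂) ∧
    -- (b) Sklar identity
    (∀ x₁ x₂ : ℝ, 0 < x₁ → 0 < x₂ →
      tailIntegral ν x₁ x₂ = Γ (1 / tailIntegral₁ ν x₁) (1 / tailIntegral₂ ν x₂)) ∧
    -- (c) marginal limits
    (∀ u₁ : ℝ, 0 < u₁ →
      Filter.Tendsto (fun u₂ : ℝ => Γ u₁ u₂) (nhdsWithin 0 (Set.Ioi 0)) (nhds (1 / u₁)) ∧
      Filter.Tendsto (fun u₂ : ℝ => Γ u₁ u₂) Filter.atTop (nhds 0)) ∧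
    (∀ u₂ : ℝ, 0 < u₂ →
      Filter.Tendsto (fun u₁ : ℝ => Γ u₁ u₂) (nhdsWithin 0 (Set.Ioi 0)) (nhds (1 / u₂)) ∧
      Filter.Tendsto (fun u₁ : ℝ => Γ u₁ u₂) Filter.atTop (nhds 0)) := by

  have hfin1 : ∀ x : ℝ, 0 < x → ν (Set.Ici x ×ˢ Set.Ioi 0) ≠ ⊤ :=
    fun x hx => PLC.fin₁ ν hint hx
  have hfin2 : ∀ x : ℝ, 0 < x → ν (Set.Ioi 0 ×ˢ Set.Ici x) ≠ ⊤ :=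
    fun x hx => PLC.fin₂ ν hint hx
  have hV₁anti := PLC.Vanti hU₁anti hV₁'
  have hV₂anti := PLC.Vanti hU₂anti hV₂'
  refine ⟨?_, ?_, ?_, ?_⟩
  · -- (a) 2-increasing
    intro u₁ u₂ v₁ v₂ hu₁ hu₂ h₁ h₂
    have hv₁ : 0 < v₁ := lt_of_lt_of_le hu₁ h₁
    have hv₂ : 0 < v₂ := lt_of_lt_of_le hu₂ h₂
    have hiu₁ : (0:ℝ) < 1/u₁ := by positivity
    have hiu₂ : (0:ℝ) < 1/u₂ := by positivity
    have hiv₁ : (0:ℝ) < 1/v₁ := by positivity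
    have hiv₂ : (0:ℝ) < 1/v₂ := by positivity
    have hab₁ : V₁ (1/u₁) ≤ V₁ (1/v₁) :=
      hV₁anti (1/v₁) hiv₁ (1/u₁) hiu₁ (one_div_le_one_div_of_le hu₁ h₁)
    have hab₂ : V₂ (1/u₂) ≤ V₂ (1/v₂) :=
      hV₂anti (1/v₂) hiv₂ (1/u₂) hiu₂ (one_div_le_one_div_of_le hu₂ h₂)
    have ha₁ : (0:ℝ) < V₁ (1/u₁) := (hV₁' _ hiu₁).1
    have ha₂ : (0:ℝ) < V₂ (1/u₂) := (hV₂' _ hiu₂).1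
    have hfin : ν (Set.Ici (V₁ (1/u₁)) ×ˢ Set.Ici (V₂ (1/u₂))) ≠ ⊤ :=
      ne_top_of_le_ne_top (hfin1 _ ha₁)
        (measure_mono (Set.prod_mono Set.Subset.rfl (Set.Ici_subset_Ioi.mpr ha₂)))
    simp only [hΓ, tailIntegral]
    exact PLC.twoInc ν hab₁ hab₂ hfin
  · -- (b) Sklar identity
    intro x₁ x₂ hx₁ hx₂
    have h₁ : tailIntegral₁ ν x₁ ∈ Set.Ioi (0:ℝ) := hU₁bij.mapsTo hx₁
    have h₂ : tailIntegral₂ ν x₂ ∈ Set.Ioi (0:ℝ) := hU₂bij.mapsTo hx₂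
    rw [hΓ, one_div_one_div, one_div_one_div, hV₁ x₁ hx₁, hV₂ x₂ hx₂]
  · -- (c) limits in u₂
    intro u₁ hu₁
    have hiu₁ : (0:ℝ) < 1/u₁ := by positivity
    have ha : (0:ℝ) < V₁ (1/u₁) := (hV₁' _ hiu₁).1
    have hL : (ν (Set.Ici (V₁ (1/u₁)) ×ˢ Set.Ioi 0)).toReal = 1/u₁ := (hV₁' _ hiu₁).2
    have hfun : (fun u₂ : ℝ => Γ u₁ u₂)
        = fun t : ℝ => (ν (Set.Ici (V₁ (1/u₁)) ×ˢ Set.Ici (V₂ (1/t)))).toReal :=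
      funext fun t => by rw [hΓ]; rfl
    constructor
    · rw [hfun]
      have H := PLC.limit_zero ν hfin1 (tailIntegral₂ ν) V₂ hU₂anti hV₂
        (fun x hx => hU₂bij.mapsTo hx) hV₂' ha
      rwa [hL] at H
    · rw [hfun]
      exact PLC.limit_top ν hfin1 (tailIntegral₂ ν) V₂ hU₂anti hV₂
        (fun x hx => hU₂bij.mapsTo hx) hV₂' ha
  · -- (c) limits in u₁
    intro u₂ hu₂
    have hiu₂ : (0:ℝ) < 1/u₂ := by positivity
    have ha : (0:ℝ) < V₂ (1/u₂) := (hV₂' _ hiu₂).1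
    set ν' : Measure (ℝ × ℝ) := ν.map Prod.swap with hν'
    have hswap : ∀ s t : Set ℝ, MeasurableSet s → MeasurableSet t →
        ν' (s ×ˢ t) = ν (t ×ˢ s) := by
      intro s t hs ht
      rw [hν', MeasureTheory.Measure.map_apply measurable_swap (hs.prod ht)]
      congr 1
      ext ⟨p, q⟩
      simp only [Set.mem_preimage, Prod.swap_prod_mk, Set.mem_prod]
      exact and_comm
    have hfin1' : ∀ x : ℝ, 0 < x → ν' (Set.Ici x ×ˢ Set.Ioi 0) ≠ ⊤ := by
      intro x hx
      rw [hswap _ _ measurableSet_Ici measurableSet_Ioi]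
      exact hfin2 x hx
    have hL : (ν' (Set.Ici (V₂ (1/u₂)) ×ˢ Set.Ioi 0)).toReal = 1/u₂ := by
      rw [hswap _ _ measurableSet_Ici measurableSet_Ioi]
      exact (hV₂' _ hiu₂).2
    have hfun : (fun u₁ : ℝ => Γ u₁ u₂)
        = fun t : ℝ => (ν' (Set.Ici (V₂ (1/u₂)) ×ˢ Set.Ici (V₁ (1/t)))).toReal :=
      funext fun t => by
        rw [hΓ, hswap _ _ measurableSet_Ici measurableSet_Ici]; rfl
    constructor
    · rw [hfun]
      have H := PLC.limit_zero ν' hfin1' (tailIntegral₁ ν) V₁ hU₁anti hV₁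
        (fun x hx => hU₁bij.mapsTo hx) hV₁' ha
      rwa [hL] at H
    · rw [hfun]
      exact PLC.limit_top ν' hfin1' (tailIntegral₁ ν) V₁ hU₁anti hV₁
        (fun x hx => hU₁bij.mapsTo hx) hV₁' ha
end
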